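/- Let 1 < q ≤ 2, let f ∈ ℝ with f ≠ 0, and let x ∈ ℝ. Define γ_q(x; t) for t > 0 by γ_q(x; t) = (q/2)·t^{q-2}·x² if |x| ≤ t, and γ_q(x; t) = |x|^q − (1 − q/2)·t^q otherwise. Then ((q−1)/(q·2^q))·γ_q(x; |f|) ≤ |f + x|^q − |f|^q − q·sign(f)·|f|^{q−1}·x ≤ 2^q·γ_q(x; |f|). -/

import Mathlib

noncomputable def gammaQ (q x f : ℝ) : ℝ :=
  if |x| ≤ f then (q / 2) * f ^ (q - 2) * x ^ 2 else |x| ^ q - (1 - q / 2) * f ^ q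

open Real Set

lemma mono_Icc {F F' : ℝ → ℝ} {a b : ℝ}
    (hc : ContinuousOn F (Icc a b))
    (hd : ∀ x ∈ Ioo a b, HasDerivAt F (F' x) x)
    (h0 : ∀ x ∈ Ioo a b, 0 ≤ F' x)
    {x : ℝ} (hx : x ∈ Icc a b) : F a ≤ F x := by
  have hm : MonotoneOn F (Icc a b) := by
    apply monotoneOn_of_deriv_nonneg (convex_Icc a b) hc
    · rw [interior_Icc]
      exact fun y hy => (hd y hy).differentiableAt.differentiableWithinAt
    · rw [interior_Icc]
      intro y hy; rw [(hd y hy).deriv]; exact h0 y hy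
  exact hm ⟨le_refl a, hx.1.trans hx.2⟩ hx hx.1

lemma mono_Ici {F F' : ℝ → ℝ} {a : ℝ}
    (hc : ContinuousOn F (Ici a))
    (hd : ∀ x ∈ Ioi a, HasDerivAt F (F' x) x)
    (h0 : ∀ x ∈ Ioi a, 0 ≤ F' x)
    {x : ℝ} (hx : a ≤ x) : F a ≤ F x := by
  have hm : MonotoneOn F (Ici a) := by
    apply monotoneOn_of_deriv_nonneg (convex_Ici a) hc
    · rw [interior_Ici]
      exact fun y hy => (hd y hy).differentiableAt.differentiableWithinAt
    · rw [interior_Ici]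
      intro y hy; rw [(hd y hy).deriv]; exact h0 y hy
  exact hm (mem_Ici.mpr (le_refl a)) hx hx

lemma real_rpow_add_le {a b q : ℝ} (ha : 0 ≤ a) (hb : 0 ≤ b) (hp : 1 ≤ q) :
    (a + b) ^ q ≤ 2 ^ (q - 1) * (a ^ q + b ^ q) := by
  have h := NNReal.rpow_add_le_mul_rpow_add_rpow ⟨a, ha⟩ ⟨b, hb⟩ hp
  have h2 := NNReal.coe_le_coe.mpr h
  push_cast at h2
  convert h2 using 3 <;> rfl

-- continuity helper
lemma cont_rpow_aff (a b q : ℝ) (hq : 0 ≤ q) : Continuous fun u : ℝ => (a + b * u) ^ q := by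
  apply Continuous.rpow_const (by continuity)
  exact fun x => Or.inr hq

-- L1: upper bound on [0, ∞)
lemma L1 {q : ℝ} (hq1 : 1 < q) (hq2 : q ≤ 2) {u : ℝ} (hu : 0 ≤ u) :
    (1 + u) ^ q - 1 - q * u ≤ q / 2 * u ^ 2 := by
  have key : (fun u : ℝ => q / 2 * u ^ 2 + 1 + q * u - (1 + u) ^ q) 0 ≤
      (fun u : ℝ => q / 2 * u ^ 2 + 1 + q * u - (1 + u) ^ q) u := by
    refine mono_Ici (F := fun u : ℝ => q / 2 * u ^ 2 + 1 + q * u - (1 + u) ^ q)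
      (F' := fun u => q / 2 * (2 * u) + q - 1 * q * (1 + u) ^ (q - 1)) ?_ ?_ ?_ hu
    · apply Continuous.continuousOn
      have := cont_rpow_aff 1 1 q (by linarith)
      simp only [one_mul] at this
      continuity
    · intro y hy
      have h1 : HasDerivAt (fun u : ℝ => 1 + u) 1 y := (hasDerivAt_id y).const_add 1
      have h2 : HasDerivAt (fun u : ℝ => (1 + u) ^ q) (1 * q * (1 + y) ^ (q - 1)) y :=
        h1.rpow_const (Or.inl (by simp at hy; positivity))
      have h3 : HasDerivAt (fun u : ℝ => q / 2 * u ^ 2) (q / 2 * (2 * y ^ 1)) y :=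
        (hasDerivAt_pow 2 y).const_mul (q / 2)
      have h4 := ((h3.add_const 1).add ((hasDerivAt_id y).const_mul q)).sub h2
      refine h4.congr_deriv ?_
      ring
    · intro y hy
      simp only [mem_Ioi] at hy
      have hy0 : (0:ℝ) < y := hy
      have hb : (1:ℝ) ≤ 1 + y := by linarith
      have h5 : (1 + y) ^ (q - 1) ≤ (1 + y) ^ (1:ℝ) :=
        rpow_le_rpow_of_exponent_le hb (by linarith)
      rw [rpow_one] at h5
      nlinarith
  beta_reduce at key
  rw [show ((1:ℝ)+0) = 1 by ring, one_rpow] at key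
  nlinarith [key]

-- L2: upper bound for v ∈ [0,1]
lemma L2 {q : ℝ} (hq1 : 1 < q) (hq2 : q ≤ 2) {v : ℝ} (hv : v ∈ Icc (0:ℝ) 1) :
    (1 - v) ^ q - 1 + q * v ≤ q / 2 * v ^ 2 := by
  have key : (fun v : ℝ => q / 2 * v ^ 2 + 1 - q * v - (1 - v) ^ q) 0 ≤
      (fun v : ℝ => q / 2 * v ^ 2 + 1 - q * v - (1 - v) ^ q) v := by
    refine mono_Icc (b := 1) (F := fun v : ℝ => q / 2 * v ^ 2 + 1 - q * v - (1 - v) ^ q)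
      (F' := fun v => q / 2 * (2 * v) - q - (-1) * q * (1 - v) ^ (q - 1)) ?_ ?_ ?_ hv
    · apply Continuous.continuousOn
      have := cont_rpow_aff 1 (-1) q (by linarith)
      simp only [neg_mul, one_mul, ← sub_eq_add_neg] at this
      continuity
    · intro y hy
      simp only [mem_Ioo] at hy
      have h1 : HasDerivAt (fun v : ℝ => 1 - v) (-1) y := by
        simpa using (hasDerivAt_id y).const_sub 1
      have h2 : HasDerivAt (fun v : ℝ => (1 - v) ^ q) ((-1) * q * (1 - y) ^ (q - 1)) y :=
        h1.rpow_const (Or.inl (by nlinarith [hy.1, hy.2]))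
      have h3 : HasDerivAt (fun v : ℝ => q / 2 * v ^ 2) (q / 2 * (2 * y ^ 1)) y :=
        (hasDerivAt_pow 2 y).const_mul (q / 2)
      have h4 := ((h3.add_const 1).sub ((hasDerivAt_id y).const_mul q)).sub h2
      refine h4.congr_deriv ?_
      ring
    · intro y hy
      simp only [mem_Ioo] at hy
      have hb0 : (0:ℝ) < 1 - y := by linarith [hy.2]
      have hb1 : 1 - y ≤ 1 := by linarith [hy.1]
      have h5 : (1 - y) ^ (1:ℝ) ≤ (1 - y) ^ (q - 1) :=
        rpow_le_rpow_of_exponent_ge hb0 hb1 (by linarith)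
      rw [rpow_one] at h5
      nlinarith [hy.1]
  beta_reduce at key
  rw [show (1:ℝ) - 0 = 1 by ring, one_rpow] at key
  nlinarith [key]

-- numeric facts
lemma L3 {q : ℝ} (hq1 : 1 < q) : 1 + q ≤ 2 ^ q := by
  calc 1 + q = 1 + q * 1 := by ring
    _ ≤ (1 + 1) ^ q := one_add_mul_self_le_rpow_one_add (by norm_num) hq1.le
    _ = 2 ^ q := by norm_num

lemma L4 {q : ℝ} (hq1 : 1 < q) (hq2 : q ≤ 2) : 2 ^ (q - 1) ≤ q := by
  calc (2:ℝ) ^ (q-1) = (1 + 1) ^ (q - 1) := by norm_num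
    _ ≤ 1 + (q - 1) * 1 := rpow_one_add_le_one_add_mul_self (by norm_num) (by linarith) (by linarith)
    _ = q := by ring

lemma L5 {q : ℝ} (hq1 : 1 < q) : 1 + (q - 1) / 2 ≤ 2 ^ (q - 1) := by
  rw [rpow_def_of_pos (by norm_num : (0:ℝ) < 2)]
  have h1 : 1 + Real.log 2 * (q - 1) ≤ Real.exp (Real.log 2 * (q - 1)) := by
    linarith [Real.add_one_le_exp (Real.log 2 * (q - 1))]
  have h2 : (0.6931471803 : ℝ) < Real.log 2 := Real.log_two_gt_d9
  nlinarith

lemma L45 {q : ℝ} (hq1 : 1 < q) (hq2 : q ≤ 2) : (1:ℝ) ≤ 2 ^ (q-1) ∧ (2:ℝ) ≤ 2 ^ q ∧ (2:ℝ) ^ q ≤ 4 ∧ (2:ℝ)^q = 2 * 2^(q-1) := by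
  refine ⟨?_, ?_, ?_, ?_⟩
  · calc (1:ℝ) = 2 ^ (0:ℝ) := by norm_num
      _ ≤ 2 ^ (q-1) := rpow_le_rpow_of_exponent_le (by norm_num) (by linarith)
  · calc (2:ℝ) = 2 ^ (1:ℝ) := by norm_num
      _ ≤ 2 ^ q := rpow_le_rpow_of_exponent_le (by norm_num) (by linarith)
  · calc (2:ℝ) ^ q ≤ 2 ^ (2:ℝ) := rpow_le_rpow_of_exponent_le (by norm_num) hq2
      _ = 4 := by rw [show (2:ℝ) = ((2:ℕ):ℝ) by norm_num, rpow_natCast]; norm_num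
  · rw [show q = 1 + (q-1) by ring, rpow_add (by norm_num : (0:ℝ)<2)]
    norm_num

-- L6: (1+u)^(q-1) - 1 ≥ (q-1) * 2^(q-2) * u on [0,1]
lemma L6 {q : ℝ} (hq1 : 1 < q) (hq2 : q ≤ 2) {u : ℝ} (hu : u ∈ Icc (0:ℝ) 1) :
    (q - 1) * 2 ^ (q - 2) * u ≤ (1 + u) ^ (q - 1) - 1 := by
  have key : (fun u : ℝ => (1 + u) ^ (q-1) - 1 - (q-1) * 2 ^ (q-2) * u) 0 ≤
      (fun u : ℝ => (1 + u) ^ (q-1) - 1 - (q-1) * 2 ^ (q-2) * u) u := by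
    refine mono_Icc (b := 1) (F := fun u : ℝ => (1 + u) ^ (q-1) - 1 - (q-1) * 2 ^ (q-2) * u)
      (F' := fun u => 1 * (q-1) * (1 + u) ^ (q - 2) - (q-1) * 2 ^ (q-2)) ?_ ?_ ?_ hu
    · apply Continuous.continuousOn
      have := cont_rpow_aff 1 1 (q-1) (by linarith)
      simp only [one_mul] at this
      continuity
    · intro y hy
      simp only [mem_Ioo] at hy
      have h1 : HasDerivAt (fun u : ℝ => 1 + u) 1 y := (hasDerivAt_id y).const_add 1
      have h2 : HasDerivAt (fun u : ℝ => (1 + u) ^ (q-1)) (1 * (q-1) * (1 + y) ^ (q - 1 - 1)) y :=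
        h1.rpow_const (Or.inl (by intro h; nlinarith [hy.1]))
      have h4 := (h2.sub_const 1).sub ((hasDerivAt_id y).const_mul ((q-1) * 2 ^ (q-2)))
      refine h4.congr_deriv ?_
      rw [show q - 1 - 1 = q - 2 by ring]
      ring
    · intro y hy
      simp only [mem_Ioo] at hy
      have h5 : (1 + y) ^ (q - 2) ≥ 2 ^ (q-2) := by
        apply rpow_le_rpow_of_nonpos (by linarith [hy.1]) (by linarith [hy.2]) (by linarith)
      beta_reduce
      nlinarith
  beta_reduce at key
  rw [show ((1:ℝ)+0) = 1 by ring, one_rpow] at key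
  nlinarith [key]

-- L8: 1 - (1-v)^(q-1) ≥ (q-1) * 2^(q-2) * v on [0,1]
lemma L8 {q : ℝ} (hq1 : 1 < q) (hq2 : q ≤ 2) {v : ℝ} (hv : v ∈ Icc (0:ℝ) 1) :
    (q - 1) * 2 ^ (q - 2) * v ≤ 1 - (1 - v) ^ (q - 1) := by
  have key : (fun v : ℝ => 1 - (1 - v) ^ (q-1) - (q-1) * 2 ^ (q-2) * v) 0 ≤
      (fun v : ℝ => 1 - (1 - v) ^ (q-1) - (q-1) * 2 ^ (q-2) * v) v := by
    refine mono_Icc (b := 1) (F := fun v : ℝ => 1 - (1 - v) ^ (q-1) - (q-1) * 2 ^ (q-2) * v)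
      (F' := fun v => -((-1) * (q-1) * (1 - v) ^ (q - 2)) - (q-1) * 2 ^ (q-2)) ?_ ?_ ?_ hv
    · apply Continuous.continuousOn
      have := cont_rpow_aff 1 (-1) (q-1) (by linarith)
      simp only [neg_mul, one_mul, ← sub_eq_add_neg] at this
      continuity
    · intro y hy
      simp only [mem_Ioo] at hy
      have h1 : HasDerivAt (fun v : ℝ => 1 - v) (-1) y := by
        simpa using (hasDerivAt_id y).const_sub 1
      have h2 : HasDerivAt (fun v : ℝ => (1 - v) ^ (q-1)) ((-1) * (q-1) * (1 - y) ^ (q - 1 - 1)) y :=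
        h1.rpow_const (Or.inl (by nlinarith [hy.1, hy.2]))
      have h4 := ((h2.const_sub 1)).sub ((hasDerivAt_id y).const_mul ((q-1) * 2 ^ (q-2)))
      refine h4.congr_deriv ?_
      rw [show q - 1 - 1 = q - 2 by ring]
      ring
    · intro y hy
      simp only [mem_Ioo] at hy
      have hb0 : (0:ℝ) < 1 - y := by linarith [hy.2]
      have h5 : (1:ℝ) ≤ (1 - y) ^ (q - 2) :=
        one_le_rpow_of_pos_of_le_one_of_nonpos hb0 (by linarith [hy.1]) (by linarith)
      have h6 : (2:ℝ) ^ (q-2) ≤ 1 :=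
        rpow_le_one_of_one_le_of_nonpos (by norm_num) (by linarith)
      beta_reduce
      nlinarith
  beta_reduce at key
  rw [show (1:ℝ) - 0 = 1 by ring, one_rpow] at key
  nlinarith [key]

-- L7: lower bound on [0,1]
lemma L7 {q : ℝ} (hq1 : 1 < q) (hq2 : q ≤ 2) {u : ℝ} (hu : u ∈ Icc (0:ℝ) 1) :
    q * (q - 1) * 2 ^ (q - 2) / 2 * u ^ 2 ≤ (1 + u) ^ q - 1 - q * u := by
  set c : ℝ := q * (q - 1) * 2 ^ (q - 2) / 2 with hc
  have key : (fun u : ℝ => (1 + u) ^ q - 1 - q * u - c * u ^ 2) 0 ≤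
      (fun u : ℝ => (1 + u) ^ q - 1 - q * u - c * u ^ 2) u := by
    refine mono_Icc (b := 1) (F := fun u : ℝ => (1 + u) ^ q - 1 - q * u - c * u ^ 2)
      (F' := fun u => 1 * q * (1 + u) ^ (q - 1) - q - c * (2 * u)) ?_ ?_ ?_ hu
    · apply Continuous.continuousOn
      have := cont_rpow_aff 1 1 q (by linarith)
      simp only [one_mul] at this
      continuity
    · intro y hy
      simp only [mem_Ioo] at hy
      have h1 : HasDerivAt (fun u : ℝ => 1 + u) 1 y := (hasDerivAt_id y).const_add 1
      have h2 : HasDerivAt (fun u : ℝ => (1 + u) ^ q) (1 * q * (1 + y) ^ (q - 1)) y :=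
        h1.rpow_const (Or.inl (by intro h; nlinarith [hy.1]))
      have h3 : HasDerivAt (fun u : ℝ => c * u ^ 2) (c * (2 * y ^ 1)) y :=
        (hasDerivAt_pow 2 y).const_mul c
      have h4 := (((h2.sub_const 1).sub ((hasDerivAt_id y).const_mul q))).sub h3
      refine h4.congr_deriv ?_
      ring
    · intro y hy
      have h6 := L6 hq1 hq2 (mem_Icc.mpr ⟨hy.1.le, hy.2.le⟩)
      beta_reduce
      rw [hc]
      nlinarith [hy.1, hy.2]
  beta_reduce at key
  rw [show ((1:ℝ)+0) = 1 by ring, one_rpow] at key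
  nlinarith [key]

-- L9: lower bound on [-1,0] via v
lemma L9 {q : ℝ} (hq1 : 1 < q) (hq2 : q ≤ 2) {v : ℝ} (hv : v ∈ Icc (0:ℝ) 1) :
    q * (q - 1) * 2 ^ (q - 2) / 2 * v ^ 2 ≤ (1 - v) ^ q - 1 + q * v := by
  set c : ℝ := q * (q - 1) * 2 ^ (q - 2) / 2 with hc
  have key : (fun v : ℝ => (1 - v) ^ q - 1 + q * v - c * v ^ 2) 0 ≤
      (fun v : ℝ => (1 - v) ^ q - 1 + q * v - c * v ^ 2) v := by
    refine mono_Icc (b := 1) (F := fun v : ℝ => (1 - v) ^ q - 1 + q * v - c * v ^ 2)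
      (F' := fun v => (-1) * q * (1 - v) ^ (q - 1) + q - c * (2 * v)) ?_ ?_ ?_ hv
    · apply Continuous.continuousOn
      have := cont_rpow_aff 1 (-1) q (by linarith)
      simp only [neg_mul, one_mul, ← sub_eq_add_neg] at this
      continuity
    · intro y hy
      simp only [mem_Ioo] at hy
      have h1 : HasDerivAt (fun v : ℝ => 1 - v) (-1) y := by
        simpa using (hasDerivAt_id y).const_sub 1
      have h2 : HasDerivAt (fun v : ℝ => (1 - v) ^ q) ((-1) * q * (1 - y) ^ (q - 1)) y :=
        h1.rpow_const (Or.inl (by intro h; nlinarith [hy.2]))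
      have h3 : HasDerivAt (fun v : ℝ => c * v ^ 2) (c * (2 * y ^ 1)) y :=
        (hasDerivAt_pow 2 y).const_mul c
      have h4 := (((h2.sub_const 1).add ((hasDerivAt_id y).const_mul q))).sub h3
      refine h4.congr_deriv ?_
      ring
    · intro y hy
      have h8 := L8 hq1 hq2 (mem_Icc.mpr ⟨hy.1.le, hy.2.le⟩)
      beta_reduce
      rw [hc]
      nlinarith [hy.1, hy.2]
  beta_reduce at key
  rw [show (1:ℝ) - 0 = 1 by ring, one_rpow] at key
  nlinarith [key]

-- L11: upper bound, u ≥ 1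
lemma L11 {q : ℝ} (hq1 : 1 < q) (hq2 : q ≤ 2) {u : ℝ} (hu : 1 ≤ u) :
    (1 + u) ^ q - 1 - q * u ≤ 2 ^ q * (u ^ q - (1 - q / 2)) := by
  have h1 : (1 + u) ^ q ≤ 2 ^ q * u ^ q := by
    rw [← mul_rpow (by norm_num) (by linarith)]
    exact rpow_le_rpow (by linarith) (by linarith) (by linarith)
  obtain ⟨-, -, h4, -⟩ := L45 hq1 hq2
  nlinarith [h4, hu, hq1]

-- L12: upper bound, u ≤ -1 (as v = -u ≥ 1)
lemma L12 {q : ℝ} (hq1 : 1 < q) (hq2 : q ≤ 2) {v : ℝ} (hv : 1 ≤ v) :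
    (v - 1) ^ q - 1 + q * v ≤ 2 ^ q * (v ^ q - (1 - q / 2)) := by
  have h1 : (v - 1) ^ q ≤ v ^ q := rpow_le_rpow (by linarith) (by linarith) (by linarith)
  have h2 : v ^ (1:ℝ) ≤ v ^ q := rpow_le_rpow_of_exponent_le hv (by linarith)
  rw [rpow_one] at h2
  have h3 := L3 hq1
  have h4 := L4 hq1 hq2
  obtain ⟨h5, -, -, h6⟩ := L45 hq1 hq2
  have hvq : (0:ℝ) ≤ v ^ q := rpow_nonneg (by linarith) _
  have p1 : 0 ≤ (2 ^ q - 1 - q) * v ^ q := mul_nonneg (by linarith) hvq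
  have p2 : 0 ≤ q * (v ^ q - v) := mul_nonneg (by linarith) (by linarith)
  have p3 : 0 ≤ (2 - q) * (q - 2 ^ (q - 1)) := mul_nonneg (by linarith) (by linarith)
  nlinarith [h1, h6, p1, p2, p3, sq_nonneg (q - 1)]

-- L10: lower bound, u ≥ 1
set_option maxHeartbeats 1000000 in
lemma L10 {q : ℝ} (hq1 : 1 < q) (hq2 : q ≤ 2) {u : ℝ} (hu : 1 ≤ u) :
    (q - 1) / (q * 2 ^ q) * (u ^ q - (1 - q / 2)) ≤ (1 + u) ^ q - 1 - q * u := by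
  set c1 : ℝ := (q - 1) / (q * 2 ^ q) with hc1
  obtain ⟨h2a, h2b, h2c, h2d⟩ := L45 hq1 hq2
  have hq0 : (0:ℝ) < q := by linarith
  have h2q : (0:ℝ) < 2 ^ q := by linarith
  have hc1nn : 0 ≤ c1 := div_nonneg (by linarith) (by nlinarith)
  have hc1le : c1 ≤ 1 / 2 := by
    rw [hc1, div_le_iff₀ (by nlinarith)]
    nlinarith
  have key : (fun u : ℝ => (1 + u) ^ q - 1 - q * u - c1 * (u ^ q - (1 - q/2))) 1 ≤
      (fun u : ℝ => (1 + u) ^ q - 1 - q * u - c1 * (u ^ q - (1 - q/2))) u := by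
    refine mono_Ici (F := fun u : ℝ => (1 + u) ^ q - 1 - q * u - c1 * (u ^ q - (1 - q/2)))
      (F' := fun u => 1 * q * (1 + u) ^ (q - 1) - q - c1 * (1 * q * u ^ (q - 1))) ?_ ?_ ?_ hu
    · apply Continuous.continuousOn
      have c1' := cont_rpow_aff 1 1 q (by linarith)
      have c2' := cont_rpow_aff 0 1 q (by linarith)
      simp only [one_mul, zero_add] at c1' c2'
      continuity
    · intro y hy
      simp only [mem_Ioi] at hy
      have h1 : HasDerivAt (fun u : ℝ => 1 + u) 1 y := (hasDerivAt_id y).const_add 1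
      have h2 : HasDerivAt (fun u : ℝ => (1 + u) ^ q) (1 * q * (1 + y) ^ (q - 1)) y :=
        h1.rpow_const (Or.inl (by intro h; nlinarith))
      have h3 : HasDerivAt (fun u : ℝ => u ^ q) (1 * q * y ^ (q - 1)) y :=
        (hasDerivAt_id y).rpow_const (Or.inl (by intro h; simp only [id_eq] at h; nlinarith))
      have h4 := ((h2.sub_const 1).sub ((hasDerivAt_id y).const_mul q)).sub
        (((h3.sub_const (1 - q/2))).const_mul c1)
      refine h4.congr_deriv ?_
      ring
    · intro y hy
      simp only [mem_Ioi] at hy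
      beta_reduce
      have hy1 : y ^ (q - 1) ≤ (1 + y) ^ (q - 1) :=
        rpow_le_rpow (by linarith) (by linarith) (by linarith)
      have hy2 : (2:ℝ) ^ (q - 1) ≤ (1 + y) ^ (q - 1) :=
        rpow_le_rpow (by norm_num) (by linarith) (by linarith)
      have h5 := L5 hq1
      -- (1 - c1) * 2^(q-1) ≥ 1
      have hkey : 1 ≤ (1 - c1) * 2 ^ (q - 1) := by
        have hc1' : c1 * 2 ^ (q - 1) = (q - 1) / (2 * q) := by
          rw [hc1, h2d]
          field_simp
        have : (q - 1) / (2 * q) ≤ (q - 1) / 2 := by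
          apply div_le_div_of_nonneg_left (by linarith) (by norm_num) (by linarith)
        nlinarith [h5, this, hc1']
      have hpos : (0:ℝ) ≤ y ^ (q - 1) := rpow_nonneg (by linarith) _
      nlinarith [mul_le_mul_of_nonneg_left hy2 (by linarith : (0:ℝ) ≤ 1 - c1),
        mul_le_mul_of_nonneg_left hy1 hc1nn]
  beta_reduce at key
  rw [show ((1:ℝ)+1) = 2 by ring, one_rpow] at key
  -- key : 2^q - 1 - q - c1*(1 - (1-q/2)) ≤ RHS form; need F(1) ≥ 0
  have hF1 : 0 ≤ 2 ^ q - 1 - q * 1 - c1 * (1 - (1 - q/2)) := by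
    have h7 := L7 hq1 hq2 (mem_Icc.mpr ⟨zero_le_one, le_refl (1:ℝ)⟩)
    rw [show ((1:ℝ)+1) = 2 by ring] at h7
    have h2e : (1:ℝ)/2 ≤ 2 ^ (q - 2) := by
      calc (1:ℝ)/2 = 2 ^ (-1:ℝ) := by
            rw [rpow_neg_one]; norm_num
        _ ≤ 2 ^ (q - 2) := rpow_le_rpow_of_exponent_le (by norm_num) (by linarith)
    have hc1q : c1 * (q/2) ≤ (q-1)/4 := by
      have he : c1 * (q/2) = (q-1) / (2 * 2 ^ q) := by
        rw [hc1]; field_simp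
      rw [he]
      apply div_le_div_of_nonneg_left (by linarith) (by norm_num) (by nlinarith)
    nlinarith [h7, h2e, hc1q, mul_le_mul_of_nonneg_left h2e
      (by nlinarith : (0:ℝ) ≤ q * (q - 1) / 2)]
  have h1q : 1 ^ q = (1:ℝ) := one_rpow q
  nlinarith [key, hF1, h1q]

-- L13: lower bound, u ≤ -1 (as v = -u ≥ 1)
set_option maxHeartbeats 1000000 in
lemma L13 {q : ℝ} (hq1 : 1 < q) (hq2 : q ≤ 2) {v : ℝ} (hv : 1 ≤ v) :
    (q - 1) / (q * 2 ^ q) * (v ^ q - (1 - q / 2)) ≤ (v - 1) ^ q - 1 + q * v := by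
  set c1 : ℝ := (q - 1) / (q * 2 ^ q) with hc1
  obtain ⟨h2a, h2b, h2c, h2d⟩ := L45 hq1 hq2
  have hq0 : (0:ℝ) < q := by linarith
  have h2q : (0:ℝ) < 2 ^ q := by linarith
  have hc1nn : 0 ≤ c1 := div_nonneg (by linarith) (by nlinarith)
  have hsub : v ^ q ≤ 2 ^ (q-1) * ((v - 1) ^ q + 1) := by
    have := real_rpow_add_le (a := v - 1) (b := 1) (by linarith) (by norm_num) hq1.le
    rw [one_rpow] at this
    calc v ^ q = (v - 1 + 1) ^ q := by ring_nf
      _ ≤ 2 ^ (q-1) * ((v - 1) ^ q + 1) := this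
  have hc1A : c1 * 2 ^ (q - 1) = (q - 1) / (2 * q) := by
    rw [hc1, h2d]; field_simp
  have hW : (0:ℝ) ≤ (v - 1) ^ q := rpow_nonneg (by linarith) _
  have hfrac : (q - 1) / (2 * q) ≤ 1 := by
    rw [div_le_one (by linarith)]; linarith
  have hfrac2 : (q - 1) / (2 * q) ≤ q - 1 :=
    div_le_self (by linarith) (by linarith)
  have hmul1 : c1 * v ^ q ≤ (q - 1) / (2 * q) * ((v - 1) ^ q + 1) := by
    calc c1 * v ^ q ≤ c1 * (2 ^ (q-1) * ((v - 1) ^ q + 1)) :=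
          mul_le_mul_of_nonneg_left hsub hc1nn
      _ = (q - 1) / (2 * q) * ((v - 1) ^ q + 1) := by rw [← hc1A]; ring
  have hA : (q - 1) / (2 * q) * (v - 1) ^ q ≤ (v - 1) ^ q := by
    nlinarith [mul_le_mul_of_nonneg_right hfrac hW]
  have hB : 0 ≤ c1 * (1 - q / 2) := mul_nonneg hc1nn (by linarith)
  nlinarith [hmul1, hA, hfrac2, hB, hv, hq0]

-- core lemma at f = 1
lemma core {q : ℝ} (hq1 : 1 < q) (hq2 : q ≤ 2) (u : ℝ) :
    (q - 1) / (q * 2 ^ q) * (if |u| ≤ 1 then q / 2 * u ^ 2 else |u| ^ q - (1 - q / 2)) ≤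
      |1 + u| ^ q - 1 - q * u ∧
    |1 + u| ^ q - 1 - q * u ≤
      2 ^ q * (if |u| ≤ 1 then q / 2 * u ^ 2 else |u| ^ q - (1 - q / 2)) := by
  obtain ⟨h2a, h2b, h2c, h2d⟩ := L45 hq1 hq2
  have hq0 : (0:ℝ) < q := by linarith
  have hc1q : (q - 1) / (q * 2 ^ q) * (q / 2) ≤ (q - 1) / 4 := by
    have he : (q - 1) / (q * 2 ^ q) * (q / 2) = (q - 1) / (2 * 2 ^ q) := by
      field_simp
    rw [he]
    apply div_le_div_of_nonneg_left (by linarith) (by norm_num) (by nlinarith)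
  have h2e : (1:ℝ) / 2 ≤ 2 ^ (q - 2) := by
    calc (1:ℝ)/2 = 2 ^ (-1:ℝ) := by rw [rpow_neg_one]; norm_num
      _ ≤ 2 ^ (q - 2) := rpow_le_rpow_of_exponent_le (by norm_num) (by linarith)
  by_cases h : |u| ≤ 1
  · rw [if_pos h]
    rw [abs_le] at h
    have habs : |1 + u| = 1 + u := abs_of_nonneg (by linarith [h.1])
    rw [habs]
    rcases le_or_gt 0 u with hu0 | hu0
    · have h7 := L7 hq1 hq2 (mem_Icc.mpr ⟨hu0, h.2⟩)
      have h1 := L1 hq1 hq2 hu0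
      constructor
      · nlinarith [h7, hc1q, h2e, sq_nonneg u,
          mul_le_mul_of_nonneg_right hc1q (sq_nonneg u),
          mul_le_mul_of_nonneg_right h2e (mul_nonneg (mul_nonneg hq0.le (by linarith : (0:ℝ) ≤ q - 1)) (sq_nonneg u)),
          mul_nonneg (mul_nonneg (by linarith : (0:ℝ) ≤ q - 1) (by linarith : (0:ℝ) ≤ q - 1)) (sq_nonneg u)]
      · nlinarith [h1, sq_nonneg u, mul_nonneg (mul_nonneg hq0.le (sq_nonneg u)) (by linarith : (0:ℝ) ≤ 2 ^ q - 1)]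
    · have hv : -u ∈ Icc (0:ℝ) 1 := mem_Icc.mpr ⟨by linarith, by linarith [h.1]⟩
      have h9 := L9 hq1 hq2 hv
      have h2 := L2 hq1 hq2 hv
      rw [show (1:ℝ) - -u = 1 + u by ring] at h9 h2
      rw [show (-u) ^ 2 = u ^ 2 by ring] at h9 h2
      constructor
      · nlinarith [h9, hc1q, h2e, sq_nonneg u,
          mul_le_mul_of_nonneg_right hc1q (sq_nonneg u),
          mul_le_mul_of_nonneg_right h2e (mul_nonneg (mul_nonneg hq0.le (by linarith : (0:ℝ) ≤ q - 1)) (sq_nonneg u)),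
          mul_nonneg (mul_nonneg (by linarith : (0:ℝ) ≤ q - 1) (by linarith : (0:ℝ) ≤ q - 1)) (sq_nonneg u)]
      · nlinarith [h2, sq_nonneg u, mul_nonneg (mul_nonneg hq0.le (sq_nonneg u)) (by linarith : (0:ℝ) ≤ 2 ^ q - 1)]
  · rw [if_neg h]
    push_neg at h
    rcases le_or_gt 0 u with hu0 | hu0
    · have hu1 : 1 < u := by rwa [abs_of_nonneg hu0] at h
      have habs : |1 + u| = 1 + u := abs_of_nonneg (by linarith)
      rw [habs, abs_of_nonneg hu0]
      exact ⟨L10 hq1 hq2 hu1.le, L11 hq1 hq2 hu1.le⟩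
    · have hu1 : 1 < -u := by rwa [abs_of_neg hu0] at h
      have habs : |1 + u| = -u - 1 := by
        rw [abs_of_nonpos (by linarith)]; ring
      rw [habs, abs_of_neg hu0]
      have h13 := L13 hq1 hq2 (v := -u) hu1.le
      have h12 := L12 hq1 hq2 (v := -u) hu1.le
      constructor
      · calc (q - 1) / (q * 2 ^ q) * ((-u) ^ q - (1 - q / 2))
            ≤ (-u - 1) ^ q - 1 + q * (-u) := h13
          _ = (-u - 1) ^ q - 1 - q * u := by ring
      · calc (-u - 1) ^ q - 1 - q * u = (-u - 1) ^ q - 1 + q * (-u) := by ring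
          _ ≤ 2 ^ q * ((-u) ^ q - (1 - q / 2)) := h12

lemma main_pos {q t : ℝ} (hq1 : 1 < q) (hq2 : q ≤ 2) (ht : 0 < t) (x : ℝ) :
    (q - 1) / (q * 2 ^ q) * gammaQ q x t ≤ |t + x| ^ q - t ^ q - q * t ^ (q - 1) * x ∧
    |t + x| ^ q - t ^ q - q * t ^ (q - 1) * x ≤ 2 ^ q * gammaQ q x t := by
  set u : ℝ := x / t with hu
  have hx : x = t * u := by rw [hu]; field_simp
  have htq : (0:ℝ) < t ^ q := rpow_pos_of_pos ht q
  have hab : |t + x| ^ q = t ^ q * |1 + u| ^ q := by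
    rw [hx, show t + t * u = t * (1 + u) by ring, abs_mul, abs_of_pos ht,
      mul_rpow ht.le (abs_nonneg _)]
  have hlin : q * t ^ (q - 1) * x = t ^ q * (q * u) := by
    rw [hx]
    have h1 : t ^ (q - 1) * t = t ^ q := by
      rw [← rpow_add_one (ne_of_gt ht)]; norm_num
    rw [← h1]; ring
  have hgam : gammaQ q x t =
      t ^ q * (if |u| ≤ 1 then q / 2 * u ^ 2 else |u| ^ q - (1 - q / 2)) := by
    unfold gammaQ
    have habsx : |x| = t * |u| := by rw [hx, abs_mul, abs_of_pos ht]
    by_cases hc : |u| ≤ 1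
    · have hc' : |x| ≤ t := by rw [habsx]; nlinarith [hc]
      rw [if_pos hc, if_pos hc']
      have ht2 : t ^ (q - 2) * t ^ (2:ℕ) = t ^ q := by
        rw [← Real.rpow_natCast t 2, ← rpow_add ht]
        norm_num
      rw [hx, mul_pow, ← ht2]
      ring
    · have hc' : ¬ |x| ≤ t := by
        rw [habsx]; intro hh; apply hc; nlinarith [hh]
      rw [if_neg hc, if_neg hc']
      rw [habsx, mul_rpow ht.le (abs_nonneg _)]
      ring
  obtain ⟨hl, hr⟩ := core hq1 hq2 u
  constructor
  · have h := mul_le_mul_of_nonneg_left hl htq.le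
    rw [hab, hlin, hgam]
    nlinarith [h]
  · have h := mul_le_mul_of_nonneg_left hr htq.le
    rw [hab, hlin, hgam]
    nlinarith [h]

theorem stmt0 (q f x : ℝ) (hq1 : 1 < q) (hq2 : q ≤ 2) (hf : f ≠ 0) :
    ((q - 1) / (q * 2 ^ q)) * gammaQ q x |f| ≤
      |f + x| ^ q - |f| ^ q - q * Real.sign f * |f| ^ (q - 1) * x ∧
    |f + x| ^ q - |f| ^ q - q * Real.sign f * |f| ^ (q - 1) * x ≤
      2 ^ q * gammaQ q x |f| := by
  rcases lt_or_gt_of_ne hf with hneg | hpos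
  · have hs : Real.sign f = -1 := Real.sign_of_neg hneg
    have habs : |f| = -f := abs_of_neg hneg
    have ht : (0:ℝ) < -f := by linarith
    have hfx : |f + x| = |(-f) + (-x)| := by
      rw [show (-f) + (-x) = -(f + x) by ring, abs_neg]
    have hgam : gammaQ q x (-f) = gammaQ q (-x) (-f) := by
      unfold gammaQ
      rw [abs_neg, show (-x) ^ 2 = x ^ 2 by ring]
    have h := main_pos hq1 hq2 ht (-x)
    rw [← hgam, ← hfx] at h
    rw [hs, habs]
    constructor
    · calc (q - 1) / (q * 2 ^ q) * gammaQ q x (-f)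
          ≤ |f + x| ^ q - (-f) ^ q - q * (-f) ^ (q - 1) * (-x) := h.1
        _ = |f + x| ^ q - (-f) ^ q - q * (-1) * (-f) ^ (q - 1) * x := by ring
    · calc |f + x| ^ q - (-f) ^ q - q * (-1) * (-f) ^ (q - 1) * x
          = |f + x| ^ q - (-f) ^ q - q * (-f) ^ (q - 1) * (-x) := by ring
        _ ≤ 2 ^ q * gammaQ q x (-f) := h.2
  · have hs : Real.sign f = 1 := Real.sign_of_pos hpos
    have habs : |f| = f := abs_of_pos hpos
    have h := main_pos hq1 hq2 hpos x
    rw [hs, habs]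
    constructor
    · calc (q - 1) / (q * 2 ^ q) * gammaQ q x f
          ≤ |f + x| ^ q - f ^ q - q * f ^ (q - 1) * x := h.1
        _ = |f + x| ^ q - f ^ q - q * 1 * f ^ (q - 1) * x := by ring
    · calc |f + x| ^ q - f ^ q - q * 1 * f ^ (q - 1) * x
          = |f + x| ^ q - f ^ q - q * f ^ (q - 1) * x := by ring
        _ ≤ 2 ^ q * gammaQ q x f := h.2
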